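/- Let G be a group with a finite normal subgroup H such that the quotient group G/H is a finitely generated abelian group. Then there exists a finite symmetric generating set A of G such that the geodesic language Geo(G,A) is piecewise excluding. -/

import Mathlib

/-- `w` is a word over the alphabet `A`: every letter of `w` lies in `A`. -/
def IsWordOver {G : Type*} (A : Finset G) (w : List G) : Prop :=
  ∀ x ∈ w, x ∈ A

/-- `A` is a finite symmetric (inverse-closed) generating set of the group `G`. -/
def IsSymmGen {G : Type*} [Group G] (A : Finset G) : Prop :=
  Subgroup.closure (A : Set G) = ⊤ ∧ ∀ a ∈ A, a⁻¹ ∈ A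

/-- `w` is a geodesic word over `A`: no word over `A` of strictly smaller length
evaluates to the same element of `G`. -/
def IsGeodesic {G : Type*} [Group G] (A : Finset G) (w : List G) : Prop :=
  IsWordOver A w ∧
    ∀ v : List G, IsWordOver A v → v.prod = w.prod → w.length ≤ v.length

/-- The geodesic language of `G` over `A`. -/
def Geo {G : Type*} [Group G] (A : Finset G) : Set (List G) :=
  {w | IsGeodesic A w}

/-- A language `L` of words over `A` is piecewise excluding if there is a finite set `F`
of words over `A` such that a word `w` over `A` lies in `L` iff no element of `F` is a
piecewise subword (i.e. a not-necessarily-contiguous subsequence) of `w`. -/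
def PiecewiseExcluding {G : Type*} (A : Finset G) (L : Set (List G)) : Prop :=
  ∃ F : Finset (List G), (∀ u ∈ F, IsWordOver A u) ∧
    ∀ w : List G, IsWordOver A w → (w ∈ L ↔ ∀ u ∈ F, ¬ List.Sublist u w)

/-- A sublist-downward-closed language over a finite alphabet is piecewise excluding.
This is a consequence of Higman's lemma. -/
theorem aux_piecewiseExcluding_of_downward {G : Type*} (A : Finset G) (L : Set (List G))
    (hclosed : ∀ w, IsWordOver A w → w ∈ L → ∀ u : List G, u.Sublist w → u ∈ L) :
    PiecewiseExcluding A L := by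
  classical
  set S : Set (List G) := {w | IsWordOver A w ∧ w ∉ L} with hSdef
  set M : Set (List G) := {w | w ∈ S ∧ ∀ u : List G, u.Sublist w → u ∈ S → u = w} with hMdef
  have key : ∀ u w : List G, List.SublistForall₂ (· = ·) u w ↔ u.Sublist w := by
    intro u w
    rw [List.sublistForall₂_iff]
    constructor
    · rintro ⟨l, hf, hs⟩
      rw [List.forall₂_eq_eq_eq] at hf
      exact hf ▸ hs
    · intro h
      exact ⟨u, by rw [List.forall₂_eq_eq_eq], h⟩
  have hpwo : ({l : List G | ∀ x ∈ l, x ∈ (A : Set G)}).PartiallyWellOrderedOn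
      (List.SublistForall₂ (· = ·)) :=
    Set.PartiallyWellOrderedOn.partiallyWellOrderedOn_sublistForall₂ (· = ·)
      (A.finite_toSet.partiallyWellOrderedOn)
  have hpwoS : S.PartiallyWellOrderedOn (fun a b => a.Sublist b) := by
    intro f
    obtain ⟨m, n, hmn, hr⟩ := hpwo (fun n => ⟨(f n).1, fun x hx => (f n).2.1 x hx⟩)
    exact ⟨m, n, hmn, (key _ _).1 hr⟩
  have hanti : IsAntichain (fun a b : List G => a.Sublist b) M := by
    intro x hx y hy hne hxy
    exact hne (hy.2 x hxy hx.1)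
  have hMfin : M.Finite :=
    hanti.finite_of_partiallyWellOrderedOn (hpwoS.mono fun x hx => hx.1)
  have hmin : ∀ n : ℕ, ∀ w : List G, w ∈ S → w.length ≤ n → ∃ m ∈ M, m.Sublist w := by
    intro n
    induction n with
    | zero =>
      intro w hw hl
      have hw0 : w = [] := List.length_eq_zero_iff.mp (Nat.le_zero.mp hl)
      subst hw0
      exact ⟨[], ⟨hw, fun u hu _ => List.sublist_nil.mp hu⟩, List.Sublist.refl _⟩
    | succ n ih =>
      intro w hw hl
      by_cases hc : ∀ u : List G, u.Sublist w → u ∈ S → u = w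
      · exact ⟨w, ⟨hw, hc⟩, List.Sublist.refl _⟩
      · push_neg at hc
        obtain ⟨u, hu, huS, hne⟩ := hc
        have hlt : u.length < w.length :=
          lt_of_le_of_ne hu.length_le fun h => hne (hu.eq_of_length h)
        obtain ⟨m, hm, hmw⟩ := ih u huS (by omega)
        exact ⟨m, hm, hmw.trans hu⟩
  refine ⟨hMfin.toFinset, ?_, ?_⟩
  · intro u hu
    exact ((hMfin.mem_toFinset.mp hu).1).1
  · intro w hwA
    constructor
    · intro hwL u hu hsub
      have huM := hMfin.mem_toFinset.mp hu
      exact huM.1.2 (hclosed w hwA hwL u hsub)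
    · intro hF
      by_contra hwL
      obtain ⟨m, hm, hmw⟩ := hmin w.length w ⟨hwA, hwL⟩ le_rfl
      exact hF m (hMfin.mem_toFinset.mpr hm) hmw

/-- In a commutative group, a piecewise subword of a geodesic word is geodesic. -/
theorem aux_sublist_geodesic_of_comm {Q : Type*} [CommGroup Q] (B : Finset Q)
    {w u : List Q} (hw : IsGeodesic B w) (hu : u.Sublist w) : IsGeodesic B u := by
  obtain ⟨t, ht⟩ := hu.exists_perm_append
  refine ⟨fun x hx => hw.1 x (hu.subset hx), ?_⟩
  intro v hv hvp
  have h1 : w.prod = u.prod * t.prod := by rw [ht.prod_eq, List.prod_append]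
  have h2 : (v ++ t).prod = w.prod := by rw [List.prod_append, hvp, h1]
  have h3 : IsWordOver B (v ++ t) := by
    intro x hx
    rcases List.mem_append.mp hx with h | h
    · exact hv x h
    · exact hw.1 x (ht.symm.subset (List.mem_append.mpr (Or.inr h)))
  have h4 := hw.2 (v ++ t) h3 h2
  have h5 : w.length = u.length + t.length := by rw [ht.length_eq, List.length_append]
  rw [List.length_append] at h4
  omega

theorem aux_prod_filter_ne_one {M : Type*} [Monoid M] [DecidableEq M] (l : List M) :
    (l.filter (fun x => x ≠ 1)).prod = l.prod := by
  induction l with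
  | nil => simp
  | cons a l ih =>
    rw [List.filter_cons]
    by_cases h : a = 1
    · rw [if_neg (by simp [h]), ih, List.prod_cons, h, one_mul]
    · rw [if_pos (by simp [h]), List.prod_cons, List.prod_cons, ih]

theorem aux_length_filter_lt {α : Type*} (p : α → Bool) (l : List α) (x : α)
    (hx : x ∈ l) (hpx : ¬ p x) : (l.filter p).length < l.length := by
  have hs : (l.filter p).Sublist l := List.filter_sublist
  rcases lt_or_eq_of_le hs.length_le with h | h
  · exact h
  · exfalso
    have := hs.eq_of_length h
    rw [← this] at hx
    exact hpx (List.of_mem_filter hx)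

/-- Finite-by-abelian groups have piecewise excluding geodesic language for some
finite symmetric generating set. -/
theorem finite_by_abelian_piecewise_excluding
    {G : Type*} [Group G] (H : Subgroup G) [H.Normal] [Finite H]
    (hfg : Group.FG (G ⧸ H)) (hab : ∀ x y : G ⧸ H, x * y = y * x) :
    ∃ A : Finset G, IsSymmGen A ∧ PiecewiseExcluding A (Geo A) := by
  classical
  letI : CommGroup (G ⧸ H) := { (inferInstance : Group (G ⧸ H)) with mul_comm := hab }
  set π : G →* G ⧸ H := QuotientGroup.mk' H with hπdef
  obtain ⟨S, hSclos, hSfin⟩ := Group.fg_iff.mp hfg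
  set S' : Finset (G ⧸ H) := hSfin.toFinset with hS'def
  set Abar : Finset (G ⧸ H) := (S' ∪ S'.image (·⁻¹)).erase 1 with hAbardef
  have hAbar_ne1 : (1 : G ⧸ H) ∉ Abar := Finset.notMem_erase _ _
  have hAbar_inv : ∀ q ∈ Abar, q⁻¹ ∈ Abar := by
    intro q hq
    rw [hAbardef, Finset.mem_erase, Finset.mem_union, Finset.mem_image] at hq ⊢
    refine ⟨inv_ne_one.mpr hq.1, ?_⟩
    rcases hq.2 with h | ⟨x, hx, rfl⟩
    · exact Or.inr ⟨q, h, rfl⟩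
    · simpa using Or.inl hx
  have hAbar_gen : Subgroup.closure (Abar : Set (G ⧸ H)) = ⊤ := by
    rw [eq_top_iff, ← hSclos, Subgroup.closure_le]
    intro q hq
    by_cases h1 : q = 1
    · subst h1; exact (Subgroup.closure _).one_mem
    · apply Subgroup.subset_closure
      rw [hAbardef]
      simp only [Finset.coe_erase, Set.mem_diff, Finset.coe_union, Set.mem_union,
        Finset.mem_coe, Set.mem_singleton_iff]
      exact ⟨Or.inl (hSfin.mem_toFinset.mpr hq), h1⟩
  -- the alphabet in G
  set Aset : Set G := π ⁻¹' ↑Abar ∪ ((H : Set G) \ {1}) with hAsetdef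
  have hHfin : (H : Set G).Finite := Set.toFinite _
  have hfibfin : ∀ q : G ⧸ H, (π ⁻¹' {q}).Finite := by
    intro q
    obtain ⟨g, rfl⟩ := QuotientGroup.mk'_surjective H q
    have heq : π ⁻¹' {π g} = (fun h => g * h) '' (H : Set G) := by
      ext x
      simp only [Set.mem_preimage, Set.mem_singleton_iff, Set.mem_image, SetLike.mem_coe]
      constructor
      · intro hx
        refine ⟨g⁻¹ * x, ?_, by group⟩
        have : π g = π x := hx.symm
        rw [hπdef] at this
        simpa using QuotientGroup.eq.mp (by simpa using this)
      · rintro ⟨h, hh, rfl⟩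
        rw [hπdef]
        simp only [QuotientGroup.mk'_apply]
        symm
        exact QuotientGroup.eq.mpr (by simpa using hh)
    rw [heq]
    exact hHfin.image _
  have hAfin : Aset.Finite := by
    apply Set.Finite.union
    · have : π ⁻¹' ↑Abar = ⋃ q ∈ Abar, π ⁻¹' {q} := by
        ext x; simp
      rw [this]
      exact Set.Finite.biUnion Abar.finite_toSet fun q _ => hfibfin q
    · exact hHfin.diff
  set A : Finset G := hAfin.toFinset with hAdef
  have hmemA : ∀ a : G, a ∈ A ↔ (π a ∈ Abar ∨ (a ∈ H ∧ a ≠ 1)) := by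
    intro a
    rw [hAdef, Set.Finite.mem_toFinset, hAsetdef]
    simp [Set.mem_preimage]
  have hker : ∀ a : G, π a = 1 ↔ a ∈ H := by
    intro a
    rw [hπdef]
    simpa using QuotientGroup.eq_one_iff a
  have hA_ne1 : ∀ a ∈ A, a ≠ (1 : G) := by
    intro a ha
    rcases (hmemA a).mp ha with h | h
    · intro h1
      subst h1
      rw [map_one] at h
      exact hAbar_ne1 h
    · exact h.2
  -- lifting words over Abar to words over A
  have hlift : ∀ (g : G) (s : List (G ⧸ H)), IsWordOver Abar s → s.prod = π g → s ≠ [] →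
      ∃ t : List G, IsWordOver A t ∧ t.prod = g ∧ t.length = s.length := by
    intro g s hs hsp hne
    obtain ⟨q, rest, rfl⟩ := List.exists_cons_of_ne_nil hne
    set trest : List G := rest.map (fun q => Quotient.out q) with htrestdef
    have hout : ∀ q : G ⧸ H, π q.out = q := by
      intro q
      rw [hπdef]
      simpa using QuotientGroup.out_eq' q
    have htrest_map : trest.map π = rest := by
      rw [htrestdef, List.map_map]
      simp [Function.comp_def, hout]
    have htrest_mem : IsWordOver A trest := by
      intro x hx
      rw [htrestdef] at hx
      obtain ⟨q', hq', rfl⟩ := List.mem_map.mp hx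
      apply (hmemA _).mpr
      left
      rw [hout q']
      exact hs q' (List.mem_cons_of_mem _ hq')
    have htp : π trest.prod = rest.prod := by
      rw [map_list_prod, htrest_map]
    have hprod : π g = q * rest.prod := by rw [← hsp, List.prod_cons]
    refine ⟨(g * trest.prod⁻¹) :: trest, ?_, ?_, ?_⟩
    · intro x hx
      rcases List.mem_cons.mp hx with rfl | hx
      · apply (hmemA _).mpr
        left
        have : π (g * trest.prod⁻¹) = q := by
          rw [map_mul, map_inv, htp, hprod, mul_inv_cancel_right]
        rw [this]
        exact hs q List.mem_cons_self
      · exact htrest_mem x hx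
    · rw [List.prod_cons, inv_mul_cancel_right]
    · simp [htrestdef]
  -- the reduction of a word over A to a word over Abar
  set red : List G → List (G ⧸ H) := fun w => (w.map π).filter (fun q => q ≠ 1) with hreddef
  have hred_over : ∀ w : List G, IsWordOver A w → IsWordOver Abar (red w) := by
    intro w hw q hq
    rw [hreddef] at hq
    have hq1 : q ≠ 1 := by simpa using List.of_mem_filter hq
    obtain ⟨x, hx, rfl⟩ := List.mem_map.mp (List.mem_of_mem_filter hq)
    rcases (hmemA x).mp (hw x hx) with h | h
    · exact h
    · exact absurd ((hker x).mpr h.1) hq1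
  have hred_prod : ∀ w : List G, (red w).prod = π w.prod := by
    intro w
    rw [hreddef]
    simp only
    rw [aux_prod_filter_ne_one, map_list_prod]
  have hred_len : ∀ w : List G, (red w).length ≤ w.length := by
    intro w
    rw [hreddef]
    exact le_trans (List.length_filter_le _ _) (le_of_eq (by simp))
  refine ⟨A, ⟨?_, ?_⟩, ?_⟩
  · -- generates
    rw [Subgroup.eq_top_iff']
    intro g
    have hH_sub : ∀ h : G, h ∈ H → h ∈ Subgroup.closure (A : Set G) := by
      intro h hh
      by_cases h1 : h = 1
      · subst h1; exact (Subgroup.closure _).one_mem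
      · exact Subgroup.subset_closure (by
          rw [Finset.mem_coe, hmemA]; exact Or.inr ⟨hh, h1⟩)
    have hsub : Subgroup.closure (Abar : Set (G ⧸ H)) ≤
        (Subgroup.closure (A : Set G)).map π := by
      rw [Subgroup.closure_le]
      intro q hq
      obtain ⟨x, hx⟩ := QuotientGroup.mk'_surjective H q
      refine ⟨x, Subgroup.subset_closure ?_, hx⟩
      rw [Finset.mem_coe, hmemA]
      left
      have hx' : π x = q := hx
      rw [hx']
      exact hq
    have hq : π g ∈ Subgroup.closure (Abar : Set (G ⧸ H)) := by
      rw [hAbar_gen]; trivial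
    obtain ⟨x, hxcl, hxg⟩ := hsub hq
    have hxH : x⁻¹ * g ∈ H := by
      apply QuotientGroup.eq.mp
      rw [hπdef] at hxg
      simpa using hxg
    have : g = x * (x⁻¹ * g) := by group
    rw [this]
    exact Subgroup.mul_mem _ hxcl (hH_sub _ hxH)
  · -- symmetric
    intro a ha
    rcases (hmemA a).mp ha with h | h
    · apply (hmemA _).mpr
      left
      rw [map_inv]
      exact hAbar_inv _ h
    · apply (hmemA _).mpr
      exact Or.inr ⟨H.inv_mem h.1, inv_ne_one.mpr h.2⟩
  · -- piecewise excluding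
    apply aux_piecewiseExcluding_of_downward
    intro w hwA hw u hu
    have hwgeo : IsGeodesic A w := hw
    have huA : IsWordOver A u := fun x hx => hwA x (hu.subset hx)
    by_cases hlen : u.length ≤ 1
    · refine ⟨huA, ?_⟩
      intro v hv hvp
      match u, hlen with
      | [], _ => simp
      | [a], _ =>
        have ha : a ≠ 1 := hA_ne1 a (huA a List.mem_cons_self)
        match v with
        | [] =>
          exfalso
          apply ha
          simpa using hvp.symm
        | b :: v' => simp
    · push_neg at hlen
      have hwlen : 2 ≤ w.length := le_trans hlen hu.length_le
      -- a geodesic word of length ≥ 2 has no letters in H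
      have hshort : π w.prod = 1 → False := by
        intro hp
        have hwH' : w.prod ∈ H := (hker _).mp hp
        by_cases hone : w.prod = 1
        · have := hwgeo.2 [] (by intro x hx; simp at hx) (by simp [hone])
          simp only [List.length_nil] at this
          omega
        · have := hwgeo.2 [w.prod]
            (by
              intro y hy
              rw [List.mem_singleton] at hy
              subst hy
              exact (hmemA _).mpr (Or.inr ⟨hwH', hone⟩))
            (by simp)
          simp only [List.length_singleton] at this
          omega
      have hwH : ∀ x ∈ w, π x ∈ Abar := by
        by_contra hcon
        push_neg at hcon
        obtain ⟨x, hxw, hx⟩ := hcon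
        have hxH : x ∈ H ∧ x ≠ 1 := by
          rcases (hmemA x).mp (hwA x hxw) with h | h
          · exact absurd h hx
          · exact h
        have hx1 : π x = 1 := (hker x).mpr hxH.1
        by_cases hnil : red w = []
        · apply hshort
          rw [← hred_prod, hnil, List.prod_nil]
        · obtain ⟨t, htA, htp, htl⟩ := hlift w.prod (red w) (hred_over w hwA)
            (hred_prod w) hnil
          have hle := hwgeo.2 t htA htp
          have hlt : (red w).length < w.length := by
            rw [hreddef]
            simp only
            calc ((w.map π).filter (fun q => q ≠ 1)).length
                < (w.map π).length := by
                  apply aux_length_filter_lt _ _ (π x)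
                  · exact List.mem_map.mpr ⟨x, hxw, rfl⟩
                  · simp [hx1]
              _ = w.length := by simp
          omega
      -- the image word is geodesic over Abar
      have hwmap : IsGeodesic Abar (w.map π) := by
        refine ⟨?_, ?_⟩
        · intro q hq
          obtain ⟨x, hx, rfl⟩ := List.mem_map.mp hq
          exact hwH x hx
        · intro vb hvb hvbp
          have hpv : vb.prod = π w.prod := by rw [hvbp, map_list_prod]
          rcases eq_or_ne vb [] with rfl | hne
          · exfalso
            apply hshort
            rw [← hpv, List.prod_nil]
          · obtain ⟨t, htA, htp, htl⟩ := hlift w.prod vb hvb hpv hne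
            have := hwgeo.2 t htA htp
            rw [List.length_map]
            omega
      have humap : IsGeodesic Abar (u.map π) :=
        aux_sublist_geodesic_of_comm Abar hwmap (hu.map π)
      refine ⟨huA, ?_⟩
      intro v hv hvp
      have h1 : (red v).prod = (u.map π).prod := by
        rw [hred_prod, hvp, map_list_prod]
      have h2 := humap.2 (red v) (hred_over v hv) h1
      have h3 := hred_len v
      rw [List.length_map] at h2
      omega
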